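/- Let O₁ ⊆ O₂ be valuation rings of a field K, and let 𝔬 = O₁/M₂ be the induced valuation ring on the residue field k = O₂/M₂. Then O₁ is henselian if and only if both O₂ is henselian and 𝔬 is henselian. -/

import Mathlib

open Polynomial IsLocalRing

section Helpers

variable {K : Type*} [Field K]

/-- Units of a valuation subring, characterized in the field. -/
lemma VSR.isUnit_iff (A : ValuationSubring K) (x : A) :
    IsUnit x ↔ (x : K) ≠ 0 ∧ (x : K)⁻¹ ∈ A := by
  constructor
  · rintro ⟨v, rfl⟩
    have h0 : (v : A) * ((v⁻¹ : Aˣ) : A) = 1 := v.mul_inv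
    have h1 : ((v : A) : K) * (((v⁻¹ : Aˣ) : A) : K) = 1 := by
      rw [← Subring.coe_mul, h0, OneMemClass.coe_one]
    have hne : ((v : A) : K) ≠ 0 := left_ne_zero_of_mul_eq_one h1
    refine ⟨hne, ?_⟩
    rw [inv_eq_of_mul_eq_one_right h1]
    exact (((v⁻¹ : Aˣ) : A)).2
  · rintro ⟨hne, hmem⟩
    refine IsUnit.of_mul_eq_one (a := x) ⟨(x : K)⁻¹, hmem⟩ ?_
    ext
    exact mul_inv_cancel₀ hne

lemma VSR.mem_maximalIdeal_iff (A : ValuationSubring K) (x : A) :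
    x ∈ maximalIdeal A ↔ ((x : K) = 0 ∨ (x : K)⁻¹ ∉ A) := by
  rw [IsLocalRing.mem_maximalIdeal, mem_nonunits_iff, VSR.isUnit_iff]
  tauto

variable {O₁ O₂ : ValuationSubring K} (h : O₁ ≤ O₂)

include h in
/-- An element of the maximal ideal of the coarser ring `O₂` lies in `O₁`. -/
lemma VSR.mem_of_mem_max (x : O₂) (hx : x ∈ maximalIdeal O₂) : (x : K) ∈ O₁ := by
  rw [VSR.mem_maximalIdeal_iff] at hx
  rcases hx with hx | hx
  · rw [hx]; exact O₁.zero_mem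
  · rcases O₁.mem_or_inv_mem (x : K) with h1 | h1
    · exact h1
    · exact absurd (h h1) hx

include h in
/-- An element of `O₁` that is in the maximal ideal of `O₂` is in the maximal ideal of `O₁`. -/
lemma VSR.mem_max_of_mem_max (x : O₂) (hx : x ∈ maximalIdeal O₂) (y : O₁) (hy : (y : K) = x) :
    y ∈ maximalIdeal O₁ := by
  rw [VSR.mem_maximalIdeal_iff] at hx ⊢
  rcases hx with hx | hx
  · left; rw [hy, hx]
  · right; rw [hy]; exact fun hc => hx (h hc)

/-- In a local ring, a unit plus a maximal-ideal element is a unit. -/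
lemma isUnit_add_of_mem_max {R : Type*} [CommRing R] [IsLocalRing R] {x y : R}
    (hx : IsUnit x) (hy : y ∈ maximalIdeal R) : IsUnit (x + y) := by
  by_contra hc
  rw [← mem_nonunits_iff, ← IsLocalRing.mem_maximalIdeal] at hc
  have : x ∈ maximalIdeal R := by simpa using Ideal.sub_mem _ hc hy
  rw [IsLocalRing.mem_maximalIdeal, mem_nonunits_iff] at this
  exact this hx

/-- A surjective local homomorphism transports henselianity. -/
theorem HenselianLocalRing.of_surjective {R S : Type*} [CommRing R] [CommRing S]
    [HenselianLocalRing R] [IsLocalRing S] (φ : R →+* S) (hφ : Function.Surjective φ)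
    [IsLocalHom φ] : HenselianLocalRing S where
  is_henselian := by
    intro g hg b₀ h₁ h₂
    obtain ⟨f, hfg, -, hf⟩ := Polynomial.lifts_and_degree_eq_and_monic
      ((Polynomial.lifts_iff_coeff_lifts g).2 fun n => hφ _) hg
    obtain ⟨a₀, rfl⟩ := hφ b₀
    have e1 : φ (f.eval a₀) = g.eval (φ a₀) := by
      rw [← hfg, Polynomial.eval_map, Polynomial.eval₂_at_apply]
    have e2 : φ (f.derivative.eval a₀) = g.derivative.eval (φ a₀) := by
      rw [← hfg, Polynomial.derivative_map, Polynomial.eval_map, Polynomial.eval₂_at_apply]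
    obtain ⟨a, ha, haI⟩ := HenselianLocalRing.is_henselian f hf a₀
      (by rw [IsLocalRing.mem_maximalIdeal, mem_nonunits_iff] at h₁ ⊢
          exact fun hu => h₁ (e1 ▸ hu.map φ))
      (isUnit_of_map_unit φ _ (e2 ▸ h₂))
    refine ⟨φ a, ?_, ?_⟩
    · have := ha
      rw [Polynomial.IsRoot] at this ⊢
      rw [← hfg, Polynomial.eval_map, Polynomial.eval₂_at_apply, this, map_zero]
    · rw [← map_sub]
      rw [IsLocalRing.mem_maximalIdeal, mem_nonunits_iff] at haI ⊢
      exact fun hu => haI (isUnit_of_map_unit φ _ hu)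

variable (𝔬 : ValuationSubring (IsLocalRing.ResidueField O₂))
variable (h𝔬 : ∀ x : O₂, IsLocalRing.residue O₂ x ∈ 𝔬 ↔ (x : K) ∈ O₁)

/-- The induced map `O₁ →+* 𝔬`. -/
noncomputable def VSR.indMap : O₁ →+* 𝔬 where
  toFun x := ⟨IsLocalRing.residue O₂ ⟨(x : K), h x.2⟩, (h𝔬 _).2 x.2⟩
  map_one' := by
    ext
    show IsLocalRing.residue O₂ ⟨(1 : K), _⟩ = 1
    have : (⟨(1 : K), h (O₁.one_mem)⟩ : O₂) = 1 := rfl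
    rw [this, map_one]
  map_mul' x y := by
    ext
    show IsLocalRing.residue O₂ ⟨(x : K) * y, _⟩ = _
    have : (⟨(x : K) * y, _⟩ : O₂) = ⟨(x : K), h x.2⟩ * ⟨(y : K), h y.2⟩ := rfl
    rw [this, map_mul]
    rfl
  map_zero' := by
    ext
    show IsLocalRing.residue O₂ ⟨(0 : K), _⟩ = 0
    have : (⟨(0 : K), h (O₁.zero_mem)⟩ : O₂) = 0 := rfl
    rw [this, map_zero]
  map_add' x y := by
    ext
    show IsLocalRing.residue O₂ ⟨(x : K) + y, _⟩ = _
    have : (⟨(x : K) + y, _⟩ : O₂) = ⟨(x : K), h x.2⟩ + ⟨(y : K), h y.2⟩ := rfl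
    rw [this, map_add]
    rfl

lemma VSR.indMap_surjective : Function.Surjective (VSR.indMap h 𝔬 h𝔬) := by
  rintro ⟨y, hy⟩
  obtain ⟨x, rfl⟩ := Ideal.Quotient.mk_surjective y
  refine ⟨⟨(x : K), (h𝔬 x).1 hy⟩, ?_⟩
  ext
  show IsLocalRing.residue O₂ ⟨(x : K), _⟩ = IsLocalRing.residue O₂ x
  congr 1

lemma VSR.indMap_isLocalHom : IsLocalHom (VSR.indMap h 𝔬 h𝔬) := by
  constructor
  intro x hx
  obtain ⟨y, hxy⟩ := isUnit_iff_exists_inv.1 hx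
  obtain ⟨z, rfl⟩ := VSR.indMap_surjective h 𝔬 h𝔬 y
  rw [← map_mul] at hxy
  -- x * z - 1 is in the kernel, which consists of nonunits of O₁
  have hker : IsLocalRing.residue O₂ ⟨((x * z - 1 : O₁) : K), h (x * z - 1).2⟩ = 0 := by
    have : (VSR.indMap h 𝔬 h𝔬) (x * z - 1) = 0 := by rw [map_sub, map_one, hxy, sub_self]
    exact congrArg Subtype.val this
  have hkerM : (⟨((x * z - 1 : O₁) : K), h (x * z - 1).2⟩ : O₂) ∈ maximalIdeal O₂ :=
    Ideal.Quotient.eq_zero_iff_mem.1 hker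
  have hmem : (x * z - 1 : O₁) ∈ maximalIdeal O₁ :=
    VSR.mem_max_of_mem_max h _ hkerM _ rfl
  have : IsUnit (x * z) := by
    have : x * z = 1 + (x * z - 1) := by ring
    rw [this]
    exact isUnit_add_of_mem_max isUnit_one hmem
  exact isUnit_of_mul_isUnit_left this

/-- evaluation commutes with mapping into the field -/
lemma VSR.eval_coe (A : ValuationSubring K) (f : Polynomial A) (x : A) :
    ((f.eval x : A) : K) = (f.map (algebraMap A K)).eval (x : K) := by
  rw [Polynomial.eval_map, show ((x : A) : K) = algebraMap A K x from rfl,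
    Polynomial.eval₂_at_apply]
  rfl

end Helpers

section MainDirections

variable {K : Type*} [Field K] {O₁ O₂ : ValuationSubring K} (h : O₁ ≤ O₂)
variable (𝔬 : ValuationSubring (IsLocalRing.ResidueField O₂))
variable (h𝔬 : ∀ x : O₂, IsLocalRing.residue O₂ x ∈ 𝔬 ↔ (x : K) ∈ O₁)

include h h𝔬 in
theorem VSR.induced_henselian [HenselianLocalRing O₁] : HenselianLocalRing 𝔬 := by
  haveI := VSR.indMap_isLocalHom h 𝔬 h𝔬
  exact HenselianLocalRing.of_surjective (VSR.indMap h 𝔬 h𝔬) (VSR.indMap_surjective h 𝔬 h𝔬)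

include h in
theorem VSR.coarsening_key [HenselianLocalRing O₁] (f : Polynomial O₂) (hf : f.Monic)
    (hdeg : 2 ≤ f.natDegree) (a₀ : O₂) (h₁ : f.eval a₀ ∈ maximalIdeal O₂)
    (h₂ : IsUnit (f.derivative.eval a₀)) :
    ∃ a, f.IsRoot a ∧ a - a₀ ∈ maximalIdeal O₂ := by
  obtain ⟨m, hm⟩ : ∃ m, f.natDegree = m + 2 := ⟨f.natDegree - 2, by omega⟩
  -- basic elements of O₂
  set uO : O₂ := f.derivative.eval a₀ with huO
  set w : O₂ := ((h₂.unit⁻¹ : O₂ˣ) : O₂) with hwO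
  have huw : uO * w = 1 := by
    have := h₂.unit.mul_inv
    rwa [h₂.unit_spec] at this
  set cO : O₂ := f.eval a₀ * w * w with hcO
  have hcM : cO ∈ maximalIdeal O₂ :=
    Ideal.mul_mem_right _ _ (Ideal.mul_mem_right _ _ h₁)
  -- Taylor coefficients of f at a₀
  set bO : ℕ → O₂ := fun i => (Polynomial.taylor a₀ f).coeff i with hbO
  have hb0 : bO 0 = f.eval a₀ := Polynomial.taylor_coeff_zero a₀ f
  have hb1 : bO 1 = uO := Polynomial.taylor_coeff_one a₀ f
  -- the coefficients γ j ∈ O₁ of the auxiliary monic polynomial G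
  have hγM₂ : ∀ j : ℕ, bO (j + 2) * uO ^ j * cO ^ (j + 1) ∈ maximalIdeal O₂ := fun j =>
    Ideal.mul_mem_left _ _ (Ideal.pow_mem_of_mem _ hcM _ (Nat.succ_pos j))
  set γ : ℕ → O₁ := fun j =>
    ⟨((bO (j + 2) * uO ^ j * cO ^ (j + 1) : O₂) : K), VSR.mem_of_mem_max h _ (hγM₂ j)⟩ with hγ
  have hγM : ∀ j, γ j ∈ maximalIdeal O₁ := fun j =>
    VSR.mem_max_of_mem_max h _ (hγM₂ j) _ rfl
  -- the auxiliary polynomial G over O₁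
  set G : Polynomial O₁ :=
    X ^ (m + 2) + (X ^ (m + 1) + ∑ j ∈ Finset.range (m + 1), C (γ j) * X ^ (m - j)) with hG
  have hGm : G.Monic := by
    apply Polynomial.monic_X_pow_add
    apply lt_of_le_of_lt (Polynomial.degree_add_le _ _)
    rw [max_lt_iff]
    constructor
    · apply lt_of_le_of_lt (Polynomial.degree_X_pow_le _)
      exact_mod_cast WithBot.coe_lt_coe.2 (by omega)
    · apply lt_of_le_of_lt (Polynomial.degree_sum_le _ _)
      rw [Finset.sup_lt_iff (by exact_mod_cast WithBot.bot_lt_coe _)]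
      intro j hj
      apply lt_of_le_of_lt (Polynomial.degree_C_mul_X_pow_le _ _)
      exact_mod_cast WithBot.coe_lt_coe.2 (by omega)
  have hGeval : ∀ t : O₁, G.eval t =
      t ^ (m + 2) + (t ^ (m + 1) + ∑ j ∈ Finset.range (m + 1), γ j * t ^ (m - j)) := by
    intro t
    simp [hG, Polynomial.eval_finset_sum]
  -- G(-1) is in the maximal ideal
  have hGe : G.eval (-1) ∈ maximalIdeal O₁ := by
    have : G.eval (-1) = ∑ j ∈ Finset.range (m + 1), γ j * (-1) ^ (m - j) := by
      rw [hGeval]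
      rw [pow_succ ((-1 : O₁)) (m + 1)]
      ring
    rw [this]
    exact Ideal.sum_mem _ fun j _ => Ideal.mul_mem_right _ _ (hγM j)
  -- G'(-1) is a unit
  have hGd : IsUnit (G.derivative.eval (-1)) := by
    have hsplit : G.derivative.eval (-1) = (-1 : O₁) ^ (m + 1) +
        ∑ j ∈ Finset.range (m + 1), (γ j * ((m - j : ℕ) : O₁)) * (-1) ^ (m - j - 1) := by
      simp only [hG, Polynomial.derivative_add, Polynomial.derivative_X_pow,
        Polynomial.derivative_sum, Polynomial.derivative_C_mul_X_pow,
        Polynomial.eval_add, Polynomial.eval_finset_sum, Polynomial.eval_mul,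
        Polynomial.eval_pow, Polynomial.eval_C, Polynomial.eval_X,
        Nat.add_sub_cancel, Polynomial.eval_natCast]
      push_cast
      rw [pow_succ ((-1 : O₁)) m]
      ring
    rw [hsplit]
    apply isUnit_add_of_mem_max (isUnit_one.neg.pow (m + 1))
    exact Ideal.sum_mem _ fun j _ =>
      Ideal.mul_mem_right _ _ (Ideal.mul_mem_right _ _ (hγM j))
  -- apply henselianity of O₁
  obtain ⟨t, htroot, htsub⟩ := HenselianLocalRing.is_henselian G hGm (-1) hGe hGd
  have htunit : IsUnit t := by
    have : t = -1 + (t - -1) := by ring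
    rw [this]
    exact isUnit_add_of_mem_max isUnit_one.neg htsub
  obtain ⟨hτne, hτinv⟩ := (VSR.isUnit_iff O₁ t).1 htunit
  set tinv : O₂ := ⟨((t : O₁) : K)⁻¹, h hτinv⟩ with htinv
  -- the root
  set a : O₂ := a₀ + uO * cO * tinv with ha
  have hsub : a - a₀ ∈ maximalIdeal O₂ := by
    have : a - a₀ = uO * tinv * cO := by rw [ha]; ring
    rw [this]
    exact Ideal.mul_mem_left _ _ hcM
  refine ⟨a, ?_, hsub⟩
  -- now show a is a root, working in K
  set ι : O₂ →+* K := algebraMap O₂ K with hι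
  set F : Polynomial K := f.map ι with hF
  set α₀ : K := (a₀ : K) with hα₀
  set u : K := (uO : K) with hu
  set c : K := (cO : K) with hc
  set τ : K := ((t : O₁) : K) with hτ
  set y : K := u * c * τ⁻¹ with hy
  have hFdeg : F.natDegree = m + 2 := by rw [hF, hf.natDegree_map, hm]
  set bK : ℕ → K := fun i => (Polynomial.taylor α₀ F).coeff i with hbK
  have htaymap : Polynomial.taylor α₀ F = (Polynomial.taylor a₀ f).map ι := by
    rw [Polynomial.taylor_apply, Polynomial.taylor_apply, hF, Polynomial.map_comp,
      Polynomial.map_add, Polynomial.map_X, Polynomial.map_C]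
    rfl
  have hbmap : ∀ i, bK i = (bO i : K) := by
    intro i
    rw [show bK i = (Polynomial.taylor α₀ F).coeff i from rfl, htaymap, Polynomial.coeff_map]
    rfl
  have htay : F.eval (α₀ + y) = ∑ i ∈ Finset.range (m + 3), bK i * y ^ i := by
    rw [add_comm α₀ y, ← Polynomial.taylor_eval α₀ F]
    exact Polynomial.eval_eq_sum_range' (by rw [Polynomial.natDegree_taylor, hFdeg]; omega) y
  -- coefficient identities
  have huwK : u * (w : K) = 1 := by
    simpa using congrArg (Subtype.val) huw
  have hb0K : (bO 0 : K) = c * u * u := by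
    rw [hb0, hc, hcO]
    push_cast
    linear_combination -(((f.eval a₀ : O₂) : K) * ((w : K) * u + 1)) * huwK
  have hb1K : (bO 1 : K) = u := by rw [hb1]
  -- the K-version of G(t) = 0
  have hGt : τ ^ (m + 2) + (τ ^ (m + 1) +
      ∑ j ∈ Finset.range (m + 1), (bO (j + 2) : K) * u ^ j * c ^ (j + 1) * τ ^ (m - j)) = 0 := by
    have h0 : ((G.eval t : O₁) : K) = 0 := by rw [htroot]; rfl
    rw [hGeval] at h0
    push_cast at h0
    convert h0 using 3
    exact Finset.sum_congr rfl fun j _ => rfl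
  -- final computation
  have hroot : f.eval a = 0 := by
    apply Subtype.ext
    rw [show ((0 : O₂) : K) = 0 from rfl, VSR.eval_coe O₂ f a, ← hF]
    have haK : (a : K) = α₀ + y := by
      rw [ha]
      push_cast
      ring
    rw [haK, htay]
    have hsum : ∑ i ∈ Finset.range (m + 3), bK i * y ^ i =
        (u ^ 2 * (τ⁻¹) ^ (m + 2) * c) * (τ ^ (m + 2) + (τ ^ (m + 1) +
          ∑ j ∈ Finset.range (m + 1), (bO (j + 2) : K) * u ^ j * c ^ (j + 1) * τ ^ (m - j))) := by
      rw [Finset.sum_range_succ', Finset.sum_range_succ']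
      rw [mul_add, mul_add, Finset.mul_sum]
      have hterm : ∀ j ∈ Finset.range (m + 1), bK (j + 1 + 1) * y ^ (j + 1 + 1) =
          (u ^ 2 * (τ⁻¹) ^ (m + 2) * c) * ((bO (j + 2) : K) * u ^ j * c ^ (j + 1) * τ ^ (m - j)) := by
        intro j hj
        rw [Finset.mem_range] at hj
        obtain ⟨k, rfl⟩ : ∃ k, m = j + k := ⟨m - j, by omega⟩
        rw [show j + k - j = k from by omega]
        rw [hbmap, hy]
        field_simp
        have hτk : τ ^ k * τ⁻¹ ^ k = 1 := by rw [← mul_pow, mul_inv_cancel₀ hτne, one_pow]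
        linear_combination (-((bO (j + 1 + 1) : K) * u ^ 2 * u ^ j * c ^ 2 * c ^ j * τ⁻¹ ^ 2 * τ⁻¹ ^ j)) * hτk
      rw [Finset.sum_congr rfl hterm]
      rw [hbmap 1, hbmap 0, hb1K, hb0K, hy]
      field_simp
      have hτm : τ ^ m * τ⁻¹ ^ m = 1 := by rw [← mul_pow, mul_inv_cancel₀ hτne, one_pow]
      have hτ1 : τ * τ⁻¹ = 1 := mul_inv_cancel₀ hτne
      linear_combination (-(u ^ 2 * c * (τ⁻¹ + 1))) * hτm +
        (-(u ^ 2 * c * (τ ^ m * τ⁻¹ ^ m) * (τ⁻¹ + 1 + τ * τ⁻¹))) * hτ1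
    rw [hsum, hGt, mul_zero]
  exact hroot

include h in
theorem VSR.coarsening_henselian [HenselianLocalRing O₁] : HenselianLocalRing O₂ := by
  constructor
  intro f hf a₀ h₁ h₂
  set g : Polynomial O₂ := f * (X - C (a₀ + 1)) ^ 2 with hg
  have hgm : g.Monic := hf.mul ((monic_X_sub_C (a₀ + 1)).pow 2)
  have hgdeg : 2 ≤ g.natDegree := by
    rw [hg, hf.natDegree_mul ((monic_X_sub_C (a₀ + 1)).pow 2), Polynomial.natDegree_pow,
      Polynomial.natDegree_X_sub_C]
    omega
  have hev : ∀ x : O₂, g.eval x = f.eval x * (x - (a₀ + 1)) ^ 2 := by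
    intro x
    rw [hg]
    simp only [Polynomial.eval_mul, Polynomial.eval_pow, Polynomial.eval_sub,
      Polynomial.eval_X, Polynomial.eval_C]
  have hge : g.eval a₀ ∈ maximalIdeal O₂ := by
    rw [hev, show (a₀ - (a₀ + 1)) = -1 by ring]
    simpa using h₁
  have hgd : IsUnit (g.derivative.eval a₀) := by
    have : g.derivative.eval a₀ = f.derivative.eval a₀ * (a₀ - (a₀ + 1)) ^ 2 +
        f.eval a₀ * (2 * (a₀ - (a₀ + 1))) := by
      rw [hg, Polynomial.derivative_mul, Polynomial.derivative_pow, Polynomial.derivative_X_sub_C]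
      simp only [Polynomial.eval_add, Polynomial.eval_mul, Polynomial.eval_pow,
        Polynomial.eval_sub, Polynomial.eval_X, Polynomial.eval_C, Polynomial.eval_natCast,
        Polynomial.eval_one, mul_one, Nat.cast_ofNat, Nat.add_sub_cancel, pow_one]
      ring
    rw [this, show (a₀ - (a₀ + 1)) = -1 by ring]
    have h2' : IsUnit (f.derivative.eval a₀ * (-1 : O₂) ^ 2) := by simpa using h₂
    apply isUnit_add_of_mem_max h2'
    exact Ideal.mul_mem_right _ _ h₁
  obtain ⟨a, haroot, hasub⟩ := VSR.coarsening_key h g hgm hgdeg a₀ hge hgd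
  refine ⟨a, ?_, hasub⟩
  have hgr : f.eval a * (a - (a₀ + 1)) ^ 2 = 0 := by rw [← hev]; exact haroot
  have hu : IsUnit ((a - (a₀ + 1)) ^ 2) := by
    have : a - (a₀ + 1) = -1 + (a - a₀) := by ring
    exact (by rw [this]; exact isUnit_add_of_mem_max isUnit_one.neg hasub : IsUnit (a - (a₀ + 1))).pow 2
  rw [Polynomial.IsRoot]
  exact (hu.mul_left_eq_zero).1 hgr

include h h𝔬 in
theorem VSR.henselian_of_both [HenselianLocalRing O₂] [HenselianLocalRing 𝔬] :
    HenselianLocalRing O₁ := by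
  haveI := VSR.indMap_isLocalHom h 𝔬 h𝔬
  set φ := VSR.indMap h 𝔬 h𝔬 with hφdef
  set incl : O₁ →+* O₂ := Subring.inclusion (fun x hx => h hx) with hincl
  constructor
  intro f hf a₀ h₁ h₂
  set g : Polynomial 𝔬 := f.map φ with hg
  have hgm : g.Monic := hf.map φ
  have e1 : g.eval (φ a₀) = φ (f.eval a₀) := by
    rw [hg, Polynomial.eval_map, Polynomial.eval₂_at_apply]
  have e2 : g.derivative.eval (φ a₀) = φ (f.derivative.eval a₀) := by
    rw [hg, Polynomial.derivative_map, Polynomial.eval_map, Polynomial.eval₂_at_apply]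
  -- apply henselianity of 𝔬
  obtain ⟨α, hαroot, hαsub⟩ := HenselianLocalRing.is_henselian g hgm (φ a₀)
    (by rw [e1, IsLocalRing.mem_maximalIdeal, mem_nonunits_iff] at *
        exact fun hu => h₁ (isUnit_of_map_unit φ _ hu))
    (by rw [e2]; exact h₂.map φ)
  -- apply henselianity of O₂ via the TFAE criterion
  have H := ((HenselianLocalRing.TFAE (R := ↥O₂)).out 0 1).mp ‹HenselianLocalRing ↥O₂›
  set f₂ : Polynomial O₂ := f.map incl with hf₂
  have hf₂m : f₂.Monic := hf.map incl
  have hcomm : f₂.map (IsLocalRing.residue O₂) = g.map (algebraMap 𝔬 (ResidueField O₂)) := by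
    rw [hf₂, hg, Polynomial.map_map, Polynomial.map_map]
    rfl
  have ha1 : aeval ((α : 𝔬) : ResidueField O₂) f₂ = 0 := by
    rw [aeval_def, ← Polynomial.eval_map, IsLocalRing.ResidueField.algebraMap_eq, hcomm,
      Polynomial.eval_map, show ((α : 𝔬) : ResidueField O₂) = algebraMap 𝔬 _ α from rfl,
      Polynomial.eval₂_at_apply, hαroot]
    rfl
  have hder_unit : IsUnit (g.derivative.eval α) := by
    have hmd : g.derivative.eval α - g.derivative.eval (φ a₀) ∈ maximalIdeal 𝔬 := by
      have := (SModEq.sub_mem.2 hαsub).eval g.derivative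
      exact SModEq.sub_mem.1 this
    have : g.derivative.eval α = g.derivative.eval (φ a₀) +
        (g.derivative.eval α - g.derivative.eval (φ a₀)) := by ring
    rw [this]
    exact isUnit_add_of_mem_max (e2 ▸ h₂.map φ) hmd
  have ha2 : aeval ((α : 𝔬) : ResidueField O₂) (derivative f₂) ≠ 0 := by
    rw [aeval_def, ← Polynomial.eval_map, ← Polynomial.derivative_map,
      IsLocalRing.ResidueField.algebraMap_eq, hcomm, Polynomial.derivative_map,
      Polynomial.eval_map, show ((α : 𝔬) : ResidueField O₂) = algebraMap 𝔬 _ α from rfl,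
      Polynomial.eval₂_at_apply]
    intro h0
    have : g.derivative.eval α = 0 := by
      apply Subtype.ext
      exact h0
    exact hder_unit.ne_zero this
  obtain ⟨a, haroot, hares⟩ := H f₂ hf₂m ((α : 𝔬) : ResidueField O₂) ha1 ha2
  have haO₁ : (a : K) ∈ O₁ := (h𝔬 a).1 (by rw [hares]; exact α.2)
  set a' : O₁ := ⟨(a : K), haO₁⟩ with ha'
  have hincla' : incl a' = a := Subtype.ext rfl
  have hroot' : f.eval a' = 0 := by
    have h5 : incl (f.eval a') = 0 := by
      have : incl (f.eval a') = f₂.eval (incl a') := by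
        rw [hf₂, Polynomial.eval_map, Polynomial.eval₂_at_apply]
      rw [this, hincla']
      exact haroot
    exact Subtype.ext (show ((f.eval a' : O₁) : K) = (0 : K) from congrArg Subtype.val h5)
  have hφa' : φ a' = α := by
    apply Subtype.ext
    show IsLocalRing.residue O₂ ⟨((a' : O₁) : K), _⟩ = (α : ResidueField O₂)
    rw [show (⟨((a' : O₁) : K), h a'.2⟩ : O₂) = a from Subtype.ext rfl]
    exact hares
  refine ⟨a', hroot', ?_⟩
  rw [IsLocalRing.mem_maximalIdeal, mem_nonunits_iff]
  intro hu
  have : IsUnit (φ (a' - a₀)) := hu.map φ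
  rw [map_sub, hφa'] at this
  rw [IsLocalRing.mem_maximalIdeal, mem_nonunits_iff] at hαsub
  exact hαsub this

end MainDirections

/-- Let `O₁ ⊆ O₂` be valuation rings of a field `K` and let `𝔬 = O₁/M₂` be the induced
valuation ring on the residue field `k = O₂/M₂` (characterized by: the residue of
`x ∈ O₂` lies in `𝔬` iff `x ∈ O₁`).  Then `O₁` is henselian if and only if both `O₂`
and `𝔬` are henselian. -/
theorem henselian_iff_coarsening_and_induced_henselian
    {K : Type*} [Field K] (O₁ O₂ : ValuationSubring K) (h : O₁ ≤ O₂)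
    (𝔬 : ValuationSubring (IsLocalRing.ResidueField O₂))
    (h𝔬 : ∀ x : O₂, IsLocalRing.residue O₂ x ∈ 𝔬 ↔ (x : K) ∈ O₁) :
    HenselianLocalRing O₁ ↔ (HenselianLocalRing O₂ ∧ HenselianLocalRing 𝔬) := by
  constructor
  · intro h1
    exact ⟨VSR.coarsening_henselian (O₂ := O₂) h, VSR.induced_henselian h 𝔬 h𝔬⟩
  · rintro ⟨h2, h3⟩
    exact VSR.henselian_of_both h 𝔬 h𝔬
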